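/- If R is an r×r symmetric positive definite matrix with eigenvalue decomposition R = U Σ Uᵀ, and X is an r×(n·r) real matrix of full row rank, and the matrix R' := X (R ⊗ I_n) Xᵀ is invertible, then R⁻¹ − Xᵀ R'⁻¹ X is positive semidefinite. -/

import Mathlib

open Matrix Kronecker

private lemma kron_one_posdef {r n : ℕ} {R : Matrix (Fin r) (Fin r) ℝ} (hR : R.PosDef) :
    (R ⊗ₖ (1 : Matrix (Fin n) (Fin n) ℝ)).PosDef := by
  have hRsym : Rᵀ = R := by
    simpa [conjTranspose_eq_transpose_of_trivial] using hR.isHermitian.eq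
  refine PosDef.of_dotProduct_mulVec_pos ?_ ?_
  · rw [IsHermitian, conjTranspose_eq_transpose_of_trivial,
      ← Matrix.kroneckerMap_transpose, transpose_one, hRsym]
  · intro x hx
    have key : dotProduct (star x) ((R ⊗ₖ (1 : Matrix (Fin n) (Fin n) ℝ)) *ᵥ x)
        = ∑ a : Fin n, dotProduct (star (fun i => x (i, a))) (R *ᵥ (fun j => x (j, a))) := by
      simp only [dotProduct, mulVec, star_trivial, kroneckerMap_apply, one_apply,
        Fintype.sum_prod_type, mul_ite, mul_one, mul_zero, ite_mul, zero_mul,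
        Finset.sum_ite_eq, Finset.sum_ite_eq', Finset.mem_univ, if_true]
      rw [Finset.sum_comm]
    rw [key]
    obtain ⟨⟨i, a⟩, hia⟩ := Function.ne_iff.mp hx
    have hya : (fun j => x (j, a)) ≠ 0 := fun h => hia (by simpa using congrFun h i)
    refine Finset.sum_pos' (fun b _ => ?_) ⟨a, Finset.mem_univ a, hR.dotProduct_mulVec_pos hya⟩
    by_cases hb : (fun j => x (j, b)) = 0
    · simp [hb]
    · exact (hR.dotProduct_mulVec_pos hb).le

/-- If `R` is a symmetric positive definite `r × r` matrix with eigenvalue decomposition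
`R = U Σ Uᵀ`, `X` is an `r × (n·r)` matrix of full row rank, and `R' = X (R ⊗ I_n) Xᵀ`
is invertible, then `R⁻¹ ⊗ I_n − Xᵀ R'⁻¹ X` is positive semidefinite. -/
theorem inv_sub_congr_psd {r n : ℕ}
    (R U : Matrix (Fin r) (Fin r) ℝ) (Sig : Fin r → ℝ)
    (hRpd : R.PosDef)
    (hU : Uᵀ * U = 1) (hdecomp : R = U * Matrix.diagonal Sig * Uᵀ)
    (X : Matrix (Fin r) (Fin r × Fin n) ℝ) (hX : X.rank = r)
    (R' : Matrix (Fin r) (Fin r) ℝ)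
    (hR' : R' = X * (R ⊗ₖ (1 : Matrix (Fin n) (Fin n) ℝ)) * Xᵀ)
    (hinv : IsUnit R'.det) :
    ((R⁻¹ ⊗ₖ (1 : Matrix (Fin n) (Fin n) ℝ)) - Xᵀ * R'⁻¹ * X).PosSemidef := by
  set M : Matrix (Fin r × Fin n) (Fin r × Fin n) ℝ := R ⊗ₖ (1 : Matrix (Fin n) (Fin n) ℝ) with hM
  have hMpd : M.PosDef := kron_one_posdef hRpd
  have hMps : M.PosSemidef := hMpd.posSemidef
  set S : Matrix (Fin r × Fin n) (Fin r × Fin n) ℝ := by open scoped MatrixOrder in exact CFC.sqrt M with hSdef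
  have hSS : S * S = M := by open scoped MatrixOrder in exact CFC.sqrt_mul_sqrt_self M hMps.nonneg
  have hSherm : S.IsHermitian := by open scoped MatrixOrder in exact (CFC.sqrt_nonneg M).posSemidef.1
  have hSdet : IsUnit S.det := by
    have h1 : S.det * S.det = M.det := by rw [← det_mul, hSS]
    have h2 : M.det ≠ 0 := ne_of_gt hMpd.det_pos
    exact isUnit_iff_ne_zero.mpr (fun h => h2 (by rw [← h1, h, zero_mul]))
  have hSinv : S⁻¹ * S = 1 := nonsing_inv_mul _ hSdet
  have hSinv' : S * S⁻¹ = 1 := mul_nonsing_inv _ hSdet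
  have hMinv : M⁻¹ = S⁻¹ * S⁻¹ := by rw [← hSS, Matrix.mul_inv_rev]
  have hRkron : R⁻¹ ⊗ₖ (1 : Matrix (Fin n) (Fin n) ℝ) = M⁻¹ := by
    rw [hM, Matrix.inv_kronecker, inv_one]
  -- symmetry facts
  have hMsym : Mᵀ = M := by
    simpa [conjTranspose_eq_transpose_of_trivial] using hMpd.isHermitian.eq
  have hSsym : Sᵀ = S := by
    simpa [conjTranspose_eq_transpose_of_trivial] using hSherm.eq
  have hR'sym : R'ᵀ = R' := by
    rw [hR']
    simp only [Matrix.transpose_mul, Matrix.transpose_transpose, hMsym]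
    rw [Matrix.mul_assoc]
  have hR'invsym : (R'⁻¹)ᵀ = R'⁻¹ := by rw [Matrix.transpose_nonsing_inv, hR'sym]
  set A : Matrix (Fin r × Fin n) (Fin r × Fin n) ℝ := Xᵀ * R'⁻¹ * X with hA
  have hAsym : Aᵀ = A := by
    rw [hA]
    simp only [Matrix.transpose_mul, Matrix.transpose_transpose, hR'invsym]
    rw [Matrix.mul_assoc]
  set Q : Matrix (Fin r × Fin n) (Fin r × Fin n) ℝ := 1 - S * A * S with hQ
  have hQsym : Qᵀ = Q := by
    rw [hQ, Matrix.transpose_sub, Matrix.transpose_one]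
    simp only [Matrix.transpose_mul, hSsym, hAsym, hA,
      Matrix.transpose_transpose, hR'invsym, Matrix.mul_assoc]
  -- key: S*A*S is idempotent
  have hSAS : (S * A * S) * (S * A * S) = S * A * S := by
    have h1 : X * M * Xᵀ = R' := hR'.symm
    have h2 : A * M * A = A := by
      rw [hA]
      calc Xᵀ * R'⁻¹ * X * M * (Xᵀ * R'⁻¹ * X)
          = Xᵀ * R'⁻¹ * (X * M * Xᵀ) * (R'⁻¹ * X) := by
            simp only [Matrix.mul_assoc]
        _ = Xᵀ * R'⁻¹ * R' * (R'⁻¹ * X) := by rw [h1]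
        _ = Xᵀ * (R'⁻¹ * R') * (R'⁻¹ * X) := by simp only [Matrix.mul_assoc]
        _ = Xᵀ * (R'⁻¹ * X) := by rw [nonsing_inv_mul _ hinv, Matrix.mul_one]
        _ = Xᵀ * R'⁻¹ * X := by rw [Matrix.mul_assoc]
    calc (S * A * S) * (S * A * S) = S * (A * (S * S) * A) * S := by
          simp only [Matrix.mul_assoc]
      _ = S * (A * M * A) * S := by rw [hSS]
      _ = S * A * S := by rw [h2, Matrix.mul_assoc]
  have hQidem : Q * Q = Q := by
    rw [hQ]
    simp only [Matrix.sub_mul, Matrix.mul_sub, Matrix.one_mul, Matrix.mul_one, hSAS]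
    abel
  have hQpsd : Q.PosSemidef := by
    have : Q = Qᴴ * Q := by
      rw [conjTranspose_eq_transpose_of_trivial, hQsym, hQidem]
    rw [this]
    exact posSemidef_conjTranspose_mul_self Q
  have hgoal : (R⁻¹ ⊗ₖ (1 : Matrix (Fin n) (Fin n) ℝ)) - Xᵀ * R'⁻¹ * X
      = (S⁻¹)ᴴ * Q * S⁻¹ := by
    have hSinvsym : (S⁻¹)ᴴ = S⁻¹ := by
      rw [conjTranspose_eq_transpose_of_trivial, Matrix.transpose_nonsing_inv, hSsym]
    rw [hSinvsym, hRkron, hMinv, hQ]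
    have hmid : S⁻¹ * (S * A * S) * S⁻¹ = A := by
      calc S⁻¹ * (S * A * S) * S⁻¹ = (S⁻¹ * S) * A * (S * S⁻¹) := by
            simp only [Matrix.mul_assoc]
        _ = A := by rw [hSinv, hSinv', Matrix.one_mul, Matrix.mul_one]
    simp only [Matrix.mul_sub, Matrix.sub_mul, Matrix.mul_one, Matrix.one_mul, hmid, hA]
    rw [← hA, hmid]
  rw [hgoal]
  exact hQpsd.conjTranspose_mul_mul_same S⁻¹
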